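/- Let n₄' be the 4-dimensional real nilpotent Lie algebra with basis e₁,e₂,e₃,e₄ whose only nonzero bracket of basis elements is [e₁,e₂]=e₄, and let D ∈ δ⁺(n₄') have matrix with respect to e₁,e₂,e₃,e₄ with columns (x₁₁,x₂₁,x₃₁,x₄₁), (x₁₂,x₂₂,x₃₂,x₄₂), (0,0,x₃₃,x₄₃), (0,0,0,x₁₁+x₂₂). If x₃₃ ≠ x₁₁+x₂₂ or x₄₃ = 0, then D is conjugate by an automorphism of n₄' to the derivation D₁ whose matrix has the same upper-left 3×3 block as D and fourth row (0,0,0,x₁₁+x₂₂); that is, there exists A ∈ Aut(n₄') with A ∘ D = D₁ ∘ A. -/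

import Mathlib

open Module

/-- `D` is a derivation of the real Lie algebra `L`. -/
def IsLieDeriv {L : Type*} [LieRing L] [LieAlgebra ℝ L] (D : Module.End ℝ L) : Prop :=
  ∀ x y : L, D ⁅x, y⁆ = ⁅D x, y⁆ + ⁅x, D y⁆

/-- All eigenvalues (complex roots of the characteristic polynomial) of `f` have
positive real part. -/
def PosSpec {V : Type*} [AddCommGroup V] [Module ℝ V] [Module.Finite ℝ V]
    (f : Module.End ℝ V) : Prop :=
  ∀ z ∈ ((LinearMap.charpoly f).map (algebraMap ℝ ℂ)).roots, 0 < z.re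

theorem stmt18 {L : Type*} [LieRing L] [LieAlgebra ℝ L] [Module.Finite ℝ L]
    (e : Basis (Fin 4) ℝ L)
    (h12 : ⁅e 0, e 1⁆ = e 3) (h13 : ⁅e 0, e 2⁆ = 0) (h14 : ⁅e 0, e 3⁆ = 0)
    (h23 : ⁅e 1, e 2⁆ = 0) (h24 : ⁅e 1, e 3⁆ = 0) (h34 : ⁅e 2, e 3⁆ = 0)
    (D : Module.End ℝ L) (hD : IsLieDeriv D) (hpos : PosSpec D)
    (x11 x21 x31 x41 x12 x22 x32 x42 x33 x43 : ℝ)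
    (h0 : D (e 0) = x11 • e 0 + x21 • e 1 + x31 • e 2 + x41 • e 3)
    (h1 : D (e 1) = x12 • e 0 + x22 • e 1 + x32 • e 2 + x42 • e 3)
    (h2 : D (e 2) = x33 • e 2 + x43 • e 3)
    (h3 : D (e 3) = (x11 + x22) • e 3)
    (hcase : x33 ≠ x11 + x22 ∨ x43 = 0) :
    ∃ (D₁ : Module.End ℝ L) (A : L ≃ₗ⁅ℝ⁆ L),
      D₁ (e 0) = x11 • e 0 + x21 • e 1 + x31 • e 2 ∧
      D₁ (e 1) = x12 • e 0 + x22 • e 1 + x32 • e 2 ∧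
      D₁ (e 2) = x33 • e 2 ∧
      D₁ (e 3) = (x11 + x22) • e 3 ∧
      ∀ y : L, A (D y) = D₁ (A y) := by
  classical
  -- reversed brackets
  have h21 : ⁅e 1, e 0⁆ = -e 3 := by rw [← lie_skew, h12]
  have h31 : ⁅e 2, e 0⁆ = 0 := by rw [← lie_skew, h13, neg_zero]
  have h41 : ⁅e 3, e 0⁆ = 0 := by rw [← lie_skew, h14, neg_zero]
  have h32 : ⁅e 2, e 1⁆ = 0 := by rw [← lie_skew, h23, neg_zero]
  have h42 : ⁅e 3, e 1⁆ = 0 := by rw [← lie_skew, h24, neg_zero]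
  have h43' : ⁅e 3, e 2⁆ = 0 := by rw [← lie_skew, h34, neg_zero]
  -- e 3 is central
  have had3 : LieAlgebra.ad ℝ L (e 3) = 0 := by
    apply Basis.ext e
    intro i
    fin_cases i <;>
      simp [LieAlgebra.ad_apply, h41, h42, h43', lie_self]
  have central : ∀ x : L, ⁅x, e 3⁆ = 0 := by
    intro x
    have hx : ⁅e 3, x⁆ = 0 := by
      have h' : (LieAlgebra.ad ℝ L (e 3)) x = 0 := by rw [had3]; rfl
      simpa [LieAlgebra.ad_apply] using h'
    rw [← lie_skew, hx, neg_zero]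
  -- the 2×2 upper-left determinant is nonzero
  have hdet2 : x11 * x22 - x12 * x21 ≠ 0 := by
    intro hdet0
    have hM : (LinearMap.toMatrix e e) D =
        !![x11, x12, 0, 0; x21, x22, 0, 0; x31, x32, x33, 0; x41, x42, x43, x11 + x22] := by
      ext i j
      fin_cases i <;> fin_cases j <;>
        simp [LinearMap.toMatrix_apply, h0, h1, h2, h3, Finsupp.single_apply]
    have hdet : ((LinearMap.toMatrix e e) D).det =
        (x11 * x22 - x12 * x21) * (x33 * (x11 + x22)) := by
      rw [hM]
      simp [Matrix.det_succ_row_zero, Fin.sum_univ_succ, Fin.succAbove]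
      ring
    have hcoeff : (LinearMap.charpoly D).coeff 0 = 0 := by
      have hsign := Matrix.det_eq_sign_charpoly_coeff ((LinearMap.toMatrix e e) D)
      rw [LinearMap.charpoly_toMatrix] at hsign
      rw [hdet, hdet0, zero_mul] at hsign
      simpa using hsign.symm
    have hroot : (0 : ℂ) ∈ ((LinearMap.charpoly D).map (algebraMap ℝ ℂ)).roots := by
      have hne : (LinearMap.charpoly D).map (algebraMap ℝ ℂ) ≠ 0 :=
        ((LinearMap.charpoly_monic D).map _).ne_zero
      rw [Polynomial.mem_roots hne]
      show Polynomial.eval 0 _ = 0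
      rw [← Polynomial.coeff_zero_eq_eval_zero, Polynomial.coeff_map, hcoeff, map_zero]
    have := hpos 0 hroot
    simp at this
  -- solve for the conjugating parameters
  obtain ⟨c, hEc⟩ : ∃ c : ℝ, x33 * c + x43 = (x11 + x22) * c := by
    rcases hcase with h | h
    · refine ⟨x43 / (x11 + x22 - x33), ?_⟩
      have hne : x11 + x22 - x33 ≠ 0 := by
        intro habs
        exact h (by linarith)
      field_simp
      ring
    · exact ⟨0, by simp [h]⟩
  set u : ℝ := x31 * c + x41 with hu
  set v : ℝ := x32 * c + x42 with hv
  set a : ℝ := (x11 * u + x21 * v) / (x11 * x22 - x12 * x21) with ha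
  set b : ℝ := (x12 * u + x22 * v) / (x11 * x22 - x12 * x21) with hb
  have hEa : x11 * a + x21 * b + x31 * c + x41 = (x11 + x22) * a := by
    rw [ha, hb]
    linear_combination (-u) * mul_inv_cancel₀ hdet2 - hu
  have hEb : x12 * a + x22 * b + x32 * c + x42 = (x11 + x22) * b := by
    rw [ha, hb]
    field_simp
    ring
  -- the nilpotent correction map g
  set g : L →ₗ[ℝ] L := e.constr ℝ ![a • e 3, b • e 3, c • e 3, 0] with hgdef
  have hg0 : g (e 0) = a • e 3 := by rw [hgdef, Basis.constr_basis]; simp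
  have hg1 : g (e 1) = b • e 3 := by rw [hgdef, Basis.constr_basis]; simp
  have hg2 : g (e 2) = c • e 3 := by rw [hgdef, Basis.constr_basis]; simp
  have hg3 : g (e 3) = 0 := by rw [hgdef, Basis.constr_basis]; simp
  have hgg : ∀ x : L, g (g x) = 0 := by
    have hcomp : g ∘ₗ g = 0 := by
      apply Basis.ext e
      intro i
      fin_cases i <;>
        simp [LinearMap.comp_apply, hg0, hg1, hg2, hg3, map_smul]
    intro x
    exact LinearMap.congr_fun hcomp x
  have lie_g : ∀ x y : L, ⁅x, g y⁆ = 0 := by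
    intro x y
    have hcomp : (LieAlgebra.ad ℝ L x : L →ₗ[ℝ] L) ∘ₗ g = 0 := by
      apply Basis.ext e
      intro i
      fin_cases i <;>
        simp [LinearMap.comp_apply, hg0, hg1, hg2, hg3, LieAlgebra.ad_apply, central]
    have := LinearMap.congr_fun hcomp y
    simpa [LieAlgebra.ad_apply] using this
  have g_lie : ∀ x y : L, ⁅g x, y⁆ = 0 := by
    intro x y
    rw [← lie_skew, lie_g, neg_zero]
  have gbr : ∀ x y : L, g ⁅x, y⁆ = 0 := by
    set B : L →ₗ[ℝ] L →ₗ[ℝ] L :=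
      { toFun := fun x => g ∘ₗ (LieAlgebra.ad ℝ L x : L →ₗ[ℝ] L)
        map_add' := by
          intro x y
          ext z
          simp [LieAlgebra.ad_apply, add_lie]
        map_smul' := by
          intro t x
          ext z
          simp [LieAlgebra.ad_apply, smul_lie] } with hBdef
    have hB : B = 0 := by
      apply Basis.ext e
      intro i
      apply Basis.ext e
      intro j
      have : B (e i) (e j) = g ⁅e i, e j⁆ := rfl
      rw [this]
      fin_cases i <;> fin_cases j <;>
        simp [h12, h13, h14, h23, h24, h34, h21, h31, h41, h32, h42, h43',
          lie_self, hg3]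
    intro x y
    have : B x y = g ⁅x, y⁆ := rfl
    rw [← this, hB]
    rfl
  -- the automorphism
  set finv : L →ₗ[ℝ] L := LinearMap.id - g with hfinvdef
  set f : L →ₗ[ℝ] L := LinearMap.id + g with hfdef
  have hf : ∀ x : L, f x = x + g x := fun _ => rfl
  have hleft : ∀ x : L, finv (f x) = x := by
    intro x
    have h' : finv (f x) = (x + g x) - g (x + g x) := rfl
    rw [h', map_add, hgg, add_zero]
    abel
  have hright : ∀ x : L, f (finv x) = x := by
    intro x
    have h' : f (finv x) = (x - g x) + g (x - g x) := rfl
    rw [h', map_sub, hgg, sub_zero]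
    abel
  set Ahom : L →ₗ⁅ℝ⁆ L :=
    { toLinearMap := f
      map_lie' := by
        intro x y
        show f ⁅x, y⁆ = ⁅f x, f y⁆
        rw [hf, hf, hf, gbr, add_zero, lie_add, add_lie, add_lie, lie_g, g_lie, g_lie,
          add_zero, add_zero, add_zero] } with hAhom
  set A : L ≃ₗ⁅ℝ⁆ L :=
    { toLieHom := Ahom
      invFun := finv
      left_inv := hleft
      right_inv := hright } with hA
  have hAapp : ∀ x : L, A x = f x := fun _ => rfl
  -- the target derivation
  set D₁ : Module.End ℝ L := e.constr ℝ ![x11 • e 0 + x21 • e 1 + x31 • e 2,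
      x12 • e 0 + x22 • e 1 + x32 • e 2, x33 • e 2, (x11 + x22) • e 3] with hD₁def
  have hD₁0 : D₁ (e 0) = x11 • e 0 + x21 • e 1 + x31 • e 2 := by
    rw [hD₁def, Basis.constr_basis]; simp
  have hD₁1 : D₁ (e 1) = x12 • e 0 + x22 • e 1 + x32 • e 2 := by
    rw [hD₁def, Basis.constr_basis]; simp
  have hD₁2 : D₁ (e 2) = x33 • e 2 := by
    rw [hD₁def, Basis.constr_basis]; simp
  have hD₁3 : D₁ (e 3) = (x11 + x22) • e 3 := by
    rw [hD₁def, Basis.constr_basis]; simp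
  have key : f ∘ₗ (D : L →ₗ[ℝ] L) = (D₁ : L →ₗ[ℝ] L) ∘ₗ f := by
    apply Basis.ext e
    intro i
    fin_cases i
    · show f (D (e 0)) = D₁ (f (e 0))
      rw [hf (e 0), hg0, h0, hf, map_add, map_add, map_add, map_smul, map_smul,
        map_smul, map_smul, hg0, hg1, hg2, hg3, map_add, map_smul, hD₁0, hD₁3]
      match_scalars
      · ring
      · ring
      · ring
      · linear_combination hEa
    · show f (D (e 1)) = D₁ (f (e 1))
      rw [hf (e 1), hg1, h1, hf, map_add, map_add, map_add, map_smul, map_smul,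
        map_smul, map_smul, hg0, hg1, hg2, hg3, map_add, map_smul, hD₁1, hD₁3]
      match_scalars
      · ring
      · ring
      · ring
      · linear_combination hEb
    · show f (D (e 2)) = D₁ (f (e 2))
      rw [hf (e 2), hg2, h2, hf, map_add, map_smul, map_smul, hg2, hg3,
        map_add, map_smul, hD₁2, hD₁3]
      match_scalars
      · ring
      · linear_combination hEc
    · show f (D (e 3)) = D₁ (f (e 3))
      rw [h3, map_smul, hf (e 3), hg3, add_zero, hD₁3]
  refine ⟨D₁, A, hD₁0, hD₁1, hD₁2, hD₁3, ?_⟩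
  intro y
  rw [hAapp, hAapp]
  exact LinearMap.congr_fun key y
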